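/- arXiv:2105.00711 — 4 statements merged into one kernel-verified Lean document; each statement's English description precedes it below -/
import Mathlib

section
/- Let X and Z be disjoint finite sets, Q ∈ 𝔓(Z), let y be a point not contained in X ∪ Z, and set W = X ∪ Z. The mapping σ : 𝔐*_{Q+A_y}(X, Z∪{y}) → ℭ_{Q^d}(X, Z) defined by σ(R) = τ_{W ∩ ↓_R y, W \ ↓_R y}(R|_W) is a well-defined bijection. -/
namespace Erne

variable {α : Type*}

/-- A partial order relation with carrier `X`: a reflexive, antisymmetric,
transitive subset of `X × X`. -/
def IsPor (X : Set α) (R : Set (α × α)) : Prop :=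
  R ⊆ X ×ˢ X ∧ (∀ x ∈ X, (x, x) ∈ R) ∧
    (∀ x y, (x, y) ∈ R → (y, x) ∈ R → x = y) ∧
    (∀ x y z, (x, y) ∈ R → (y, z) ∈ R → (x, z) ∈ R)

/-- The carrier of a p.o.r. (recovered from reflexivity). -/
def carrier (R : Set (α × α)) : Set α := {x | (x, x) ∈ R}

/-- The induced p.o.r. `R|_M = R ∩ (M × M)`. -/
def restrict (R : Set (α × α)) (M : Set α) : Set (α × α) := R ∩ M ×ˢ M

/-- The dual `R^d`. -/
def dual (R : Set (α × α)) : Set (α × α) := {p | (p.2, p.1) ∈ R}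

/-- `↑_R M`. -/
def upSet (R : Set (α × α)) (M : Set α) : Set α := {x | ∃ y ∈ M, (y, x) ∈ R}

/-- `↓_R M`. -/
def downSet (R : Set (α × α)) (M : Set α) : Set α := {x | ∃ y ∈ M, (x, y) ∈ R}

/-- `↑_R x`. -/
def up (R : Set (α × α)) (x : α) : Set α := {z | (x, z) ∈ R}

/-- `↓_R y`. -/
def down (R : Set (α × α)) (y : α) : Set α := {x | (x, y) ∈ R}

/-- `L` is a lower end of `R`. -/
def IsLowerEnd (R : Set (α × α)) (L : Set α) : Prop :=
  ∀ x y, (x, y) ∈ R → y ∈ L → x ∈ L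

/-- `U` is an upper end of `R`. -/
def IsUpperEnd (R : Set (α × α)) (U : Set α) : Prop :=
  ∀ x y, (x, y) ∈ R → x ∈ U → y ∈ U

/-- `M` is convex in `R`. -/
def IsConvex (R : Set (α × α)) (M : Set α) : Prop :=
  ∀ a b x, a ∈ M → b ∈ M → (a, x) ∈ R → (x, b) ∈ R → x ∈ M

/-- The set of maximal points of `R`: those `x` with `↑_R x = {x}`. -/
def maxPts (R : Set (α × α)) : Set α := {x | up R x = {x}}

/-- `max M = max R|_M`. -/
def maxOf (R : Set (α × α)) (M : Set α) : Set α := maxPts (restrict R M)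

/-- `γ_R(M) = ⋃_{(m,n) ∈ M×M} (↑_R m) ∩ (↓_R n)`, the convex hull of `M` in `R`. -/
def gamma (R : Set (α × α)) (M : Set α) : Set α :=
  {x | ∃ m ∈ M, ∃ n ∈ M, (m, x) ∈ R ∧ (x, n) ∈ R}

/-- The antichain (diagonal) `Δ_Y` on `Y`. -/
def diag (Y : Set α) : Set (α × α) := {p | p.1 = p.2 ∧ p.1 ∈ Y}

/-- `𝔘(X,Y)`: p.o.r.'s on `X ∪ Y` in which `Y` is an upper end. -/
def Uset (X Y : Set α) : Set (Set (α × α)) :=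
  {R | IsPor (X ∪ Y) R ∧ IsUpperEnd R Y}

/-- `ℭ_Q(X,Y)`: p.o.r.'s on `X ∪ Y` with `R|_Y = Q` convex in `R`. -/
def Cset (Q : Set (α × α)) (X Y : Set α) : Set (Set (α × α)) :=
  {R | IsPor (X ∪ Y) R ∧ restrict R Y = Q ∧ IsConvex R Y}

/-- `𝔐_Q(X,Y) = 𝔘(X,Y) ∩ ℭ_Q(X,Y)`. -/
def Mset (Q : Set (α × α)) (X Y : Set α) : Set (Set (α × α)) :=
  Uset X Y ∩ Cset Q X Y

/-- `𝔐*_Q(X,Y)`: members of `ℭ_Q(X,Y)` with `max Q = max R`. -/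
def MstarSet (Q : Set (α × α)) (X Y : Set α) : Set (Set (α × α)) :=
  {R ∈ Cset Q X Y | maxPts Q = maxPts R}

/-- `ℑ_Q(X,Y)`: p.o.r.'s on `X ∪ Y` with `R|_Y = Q`. -/
def Iset (Q : Set (α × α)) (X Y : Set α) : Set (Set (α × α)) :=
  {R | IsPor (X ∪ Y) R ∧ restrict R Y = Q}

/-- `𝔑*_Q(X,Y)`: members of `ℑ_Q(X,Y)` with `max Q = max R`. -/
def NstarSet (Q : Set (α × α)) (X Y : Set α) : Set (Set (α × α)) :=
  {R ∈ Iset Q X Y | maxPts Q = maxPts R}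

/-- `τ_{X,Y}(R) = (R|_X)^d ∪ ((X×Y) \ R) ∪ (R|_Y)^d`. -/
def tau (X Y : Set α) (R : Set (α × α)) : Set (α × α) :=
  dual (restrict R X) ∪ ((X ×ˢ Y) \ R) ∪ dual (restrict R Y)

/-- `𝒢_Q(M)`: members `G` of `ℑ_Q(M,Y)` with `γ_G(Y) = c(G)`. -/
def GsetM (Q : Set (α × α)) (Y M : Set α) : Set (Set (α × α)) :=
  {G ∈ Iset Q M Y | gamma G Y = carrier G}

/-- `𝔊_Q(X) = ⋃_{M ⊆ X} 𝒢_Q(M)`. -/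
def Gset (Q : Set (α × α)) (X Y : Set α) : Set (Set (α × α)) :=
  {G | ∃ M ⊆ X, G ∈ GsetM Q Y M}

/-- `ℒ(P)`: the lower ends of `P` (subsets of the carrier of `P`). -/
def lowerEnds (P : Set (α × α)) : Set (Set α) :=
  {L | L ⊆ carrier P ∧ IsLowerEnd P L}

/-- `ℋ_Q(Y, ℒ(P))`: mappings `f : Y → ℒ(P)` with `(a,b) ∈ Q → f a ⊆ f b`. -/
def Hset (Q P : Set (α × α)) (Y : Set α) : Set (↥Y → Set α) :=
  {f | (∀ y, f y ∈ lowerEnds P) ∧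
    ∀ a b : ↥Y, ((a : α), (b : α)) ∈ Q → f a ⊆ f b}

/-- `Φ(f) = P ∪ Q ∪ ⋃_{y ∈ Y} (f(y) × {y})` for `f ∈ ℋ_Q(Y, ℒ(P))`. -/
def Phi (Q : Set (α × α)) (Y : Set α) (P : Set (α × α)) (f : ↥Y → Set α) :
    Set (α × α) :=
  P ∪ Q ∪ {p | ∃ h : p.2 ∈ Y, p.1 ∈ f ⟨p.2, h⟩}

/-- `𝔉_Q(X,Y)`: pairs `(P, f)` with `P ∈ 𝔓(X)` and `f ∈ ℋ_Q(Y, ℒ(P))`;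
the first component encodes `S(f) = P`. -/
def Fset (Q : Set (α × α)) (X Y : Set α) :
    Set (Set (α × α) × (↥Y → Set α)) :=
  {pf | IsPor X pf.1 ∧ pf.2 ∈ Hset Q pf.1 Y}

/-- `𝔉*_Q(X,Y)`: those `f ∈ 𝔉_Q(X,Y)` with `X = ⋃_{y ∈ Y} f(y)`. -/
def FstarSet (Q : Set (α × α)) (X Y : Set α) :
    Set (Set (α × α) × (↥Y → Set α)) :=
  {pf ∈ Fset Q X Y | X = ⋃ y : ↥Y, pf.2 y}

/-- The transitive hull of `S`: the smallest transitive relation containing `S`. -/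
def transHull (S : Set (α × α)) : Set (α × α) :=
  {p | Relation.TransGen (fun a b => (a, b) ∈ S) p.1 p.2}


section Aux

variable {α : Type*}

lemma isPor_restrict {C M : Set α} {R : Set (α × α)} (h : IsPor C R) (hM : M ⊆ C) :
    IsPor M (restrict R M) := by
  obtain ⟨hsub, hrefl, hanti, htrans⟩ := h
  refine ⟨Set.inter_subset_right, fun x hx => ⟨hrefl x (hM hx), hx, hx⟩, ?_, ?_⟩
  · exact fun a b hab hba => hanti a b hab.1 hba.1
  · rintro a b c ⟨hab, ha, hb⟩ ⟨hbc, _, hc⟩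
    exact ⟨htrans _ _ _ hab hbc, ha, hc⟩

lemma mem_tau {D U : Set α} {S : Set (α × α)} {a b : α} :
    (a, b) ∈ tau D U S ↔
      ((b, a) ∈ S ∧ b ∈ D ∧ a ∈ D) ∨ ((a ∈ D ∧ b ∈ U) ∧ (a, b) ∉ S) ∨
        ((b, a) ∈ S ∧ b ∈ U ∧ a ∈ U) := by
  simp only [tau, dual, restrict, Set.mem_union, Set.mem_setOf_eq, Set.mem_inter_iff,
    Set.mem_prod, Set.mem_diff]
  tauto

lemma tau_isPor {D U : Set α} {S : Set (α × α)} (hDU : Disjoint D U)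
    (hS : IsPor (D ∪ U) S) (hU : IsUpperEnd S U) :
    IsPor (D ∪ U) (tau D U S) ∧ IsUpperEnd (tau D U S) U := by
  obtain ⟨hsub, hrefl, hanti, htrans⟩ := hS
  have hne : ∀ x, x ∈ D → x ∈ U → False := fun x hxD hxU =>
    Set.disjoint_left.mp hDU hxD hxU
  constructor
  · refine ⟨?_, ?_, ?_, ?_⟩
    · rintro ⟨a, b⟩ hab
      rcases mem_tau.mp hab with ⟨_, hb, ha⟩ | ⟨⟨ha, hb⟩, _⟩ | ⟨_, hb, ha⟩
      · exact ⟨Or.inl ha, Or.inl hb⟩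
      · exact ⟨Or.inl ha, Or.inr hb⟩
      · exact ⟨Or.inr ha, Or.inr hb⟩
    · intro x hx
      rcases hx with hx | hx
      · exact mem_tau.mpr (Or.inl ⟨hrefl x (Or.inl hx), hx, hx⟩)
      · exact mem_tau.mpr (Or.inr (Or.inr ⟨hrefl x (Or.inr hx), hx, hx⟩))
    · intro a b hab hba
      rcases mem_tau.mp hab with ⟨h1, hb, ha⟩ | ⟨⟨ha, hb⟩, h1⟩ | ⟨h1, hb, ha⟩ <;>
        rcases mem_tau.mp hba with ⟨h2, ha', hb'⟩ | ⟨⟨hb', ha'⟩, h2⟩ | ⟨h2, ha', hb'⟩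
      · exact hanti a b h2 h1
      · exact (hne a ha ha').elim
      · exact (hne a ha ha').elim
      · exact (hne b hb' hb).elim
      · exact (hne b hb' hb).elim
      · exact (hne a ha ha').elim
      · exact (hne b hb' hb).elim
      · exact (hne b hb' hb).elim
      · exact hanti a b h2 h1
    · intro a b c hab hbc
      rcases mem_tau.mp hab with ⟨h1, hb, ha⟩ | ⟨⟨ha, hb⟩, h1⟩ | ⟨h1, hb, ha⟩ <;>
        rcases mem_tau.mp hbc with ⟨h2, hc, hb'⟩ | ⟨⟨hb', hc⟩, h2⟩ | ⟨h2, hc, hb'⟩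
      · exact mem_tau.mpr (Or.inl ⟨htrans _ _ _ h2 h1, hc, ha⟩)
      · refine mem_tau.mpr (Or.inr (Or.inl ⟨⟨ha, hc⟩, fun hac => h2 (htrans _ _ _ h1 hac)⟩))
      · exact (hne b hb hb').elim
      · exact (hne b hb' hb).elim
      · exact (hne b hb' hb).elim
      · refine mem_tau.mpr (Or.inr (Or.inl ⟨⟨ha, hc⟩, fun hac => h1 (htrans _ _ _ hac h2)⟩))
      · exact (hne b hb' hb).elim
      · exact (hne b hb' hb).elim
      · exact mem_tau.mpr (Or.inr (Or.inr ⟨htrans _ _ _ h2 h1, hc, ha⟩))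
  · intro a b hab haU
    rcases mem_tau.mp hab with ⟨_, _, ha⟩ | ⟨⟨ha, _⟩, _⟩ | ⟨_, hb, _⟩
    · exact absurd ha (fun h => hne a h haU)
    · exact absurd ha (fun h => hne a h haU)
    · exact hb

lemma tau_tau {D U : Set α} {S : Set (α × α)} (hDU : Disjoint D U)
    (hS : IsPor (D ∪ U) S) (hU : IsUpperEnd S U) :
    tau D U (tau D U S) = S := by
  obtain ⟨hsub, hrefl, hanti, htrans⟩ := hS
  have hne : ∀ x, x ∈ D → x ∈ U → False := fun x hxD hxU =>
    Set.disjoint_left.mp hDU hxD hxU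
  ext ⟨a, b⟩
  rw [mem_tau]
  constructor
  · rintro (⟨h1, hb, ha⟩ | ⟨⟨ha, hb⟩, h1⟩ | ⟨h1, hb, ha⟩)
    · rcases mem_tau.mp h1 with ⟨h2, _, _⟩ | ⟨⟨_, ha'⟩, _⟩ | ⟨_, ha', _⟩
      · exact h2
      · exact (hne a ha ha').elim
      · exact (hne a ha ha').elim
    · by_contra hab
      exact h1 (mem_tau.mpr (Or.inr (Or.inl ⟨⟨ha, hb⟩, hab⟩)))
    · rcases mem_tau.mp h1 with ⟨_, ha', _⟩ | ⟨⟨hb', _⟩, _⟩ | ⟨h2, _, _⟩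
      · exact (hne a ha' ha).elim
      · exact (hne b hb' hb).elim
      · exact h2
  · intro hab
    have ha : a ∈ D ∪ U := (hsub hab).1
    have hb : b ∈ D ∪ U := (hsub hab).2
    rcases ha with ha | ha
    · rcases hb with hb | hb
      · exact Or.inl ⟨mem_tau.mpr (Or.inl ⟨hab, ha, hb⟩), hb, ha⟩
      · refine Or.inr (Or.inl ⟨⟨ha, hb⟩, fun h => ?_⟩)
        rcases mem_tau.mp h with ⟨_, hb', _⟩ | ⟨_, h2⟩ | ⟨_, _, ha'⟩
        · exact hne b hb' hb
        · exact h2 hab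
        · exact hne a ha ha'
    · have hbU : b ∈ U := hU a b hab ha
      exact Or.inr (Or.inr ⟨mem_tau.mpr (Or.inr (Or.inr ⟨hab, ha, hbU⟩)), hbU, ha⟩)

lemma exists_max_above {C : Set α} (hC : C.Finite) {R : Set (α × α)} (hR : IsPor C R) :
    ∀ x ∈ C, ∃ m, (x, m) ∈ R ∧ m ∈ maxPts R := by
  obtain ⟨hsub, hrefl, hanti, htrans⟩ := hR
  have hupsub : ∀ x, up R x ⊆ C := fun x z hz => (hsub hz).2
  have hfin : ∀ x, (up R x).Finite := fun x => hC.subset (hupsub x)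
  suffices h : ∀ n x, x ∈ C → (up R x).ncard ≤ n → ∃ m, (x, m) ∈ R ∧ m ∈ maxPts R by
    intro x hx; exact h _ x hx le_rfl
  intro n
  induction n with
  | zero =>
    intro x hx hcard
    have : 0 < (up R x).ncard := (Set.ncard_pos (hfin x)).mpr ⟨x, hrefl x hx⟩
    omega
  | succ n ih =>
    intro x hx hcard
    by_cases hmax : up R x = {x}
    · exact ⟨x, hrefl x hx, hmax⟩
    · have hxs : ({x} : Set α) ⊆ up R x := Set.singleton_subset_iff.mpr (hrefl x hx)
      obtain ⟨z, hz, hzx⟩ := Set.exists_of_ssubset (hxs.ssubset_of_ne (Ne.symm hmax))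
      have hzC : z ∈ C := hupsub x hz
      have hsub' : up R z ⊂ up R x := by
        constructor
        · intro w hw; exact htrans _ _ _ hz hw
        · intro h
          have : x ∈ up R z := h (hrefl x hx)
          exact hzx (Set.mem_singleton_iff.mpr (hanti z x this hz))
      have hlt : (up R z).ncard < (up R x).ncard := Set.ncard_lt_ncard hsub' (hfin x)
      obtain ⟨m, hzm, hm⟩ := ih z hzC (by omega)
      exact ⟨m, htrans _ _ _ hz hzm, hm⟩

lemma maxPts_union_single {Z : Set α} {Q : Set (α × α)} (hQ : IsPor Z Q) {y : α}
    (hy : y ∉ Z) :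
    maxPts (Q ∪ {(y, y)}) = maxPts Q ∪ {y} := by
  obtain ⟨hsub, hrefl, hanti, htrans⟩ := hQ
  have hup : ∀ x, x ≠ y → up (Q ∪ {(y, y)}) x = up Q x := by
    intro x hxy
    ext w
    constructor
    · rintro (h | h)
      · exact h
      · exact absurd (congrArg Prod.fst h) hxy
    · exact fun h => Or.inl h
  have hupy : up (Q ∪ {(y, y)}) y = {y} := by
    ext w
    constructor
    · rintro (h | h)
      · exact absurd (hsub h).1 hy
      · exact Set.mem_singleton_iff.mpr (congrArg Prod.snd h)
    · intro h
      rw [Set.mem_singleton_iff] at h; subst h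
      exact Or.inr rfl
  ext x
  simp only [maxPts, Set.mem_setOf_eq, Set.mem_union, Set.mem_singleton_iff]
  by_cases hxy : x = y
  · subst hxy; exact iff_of_true hupy (Or.inr rfl)
  · rw [hup x hxy]
    exact ⟨fun h => Or.inl h, fun h => h.elim id fun h' => absurd h' hxy⟩

lemma domain_facts {X Z : Set α} {Q : Set (α × α)} (hQ : IsPor Z Q)
    {y : α} (hy : y ∉ X ∪ Z) {R : Set (α × α)}
    (hR : R ∈ MstarSet (Q ∪ {(y, y)}) X (Z ∪ {y})) :
    Z ⊆ (X ∪ Z) \ down R y ∧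
    IsPor (X ∪ Z) (restrict R (X ∪ Z)) ∧
    IsUpperEnd (restrict R (X ∪ Z)) ((X ∪ Z) \ down R y) ∧
    R = restrict R (X ∪ Z) ∪ ((X ∪ Z) ∩ down R y ∪ {y}) ×ˢ {y} ∧
    maxPts R = maxPts Q ∪ {y} := by
  obtain ⟨⟨hpor, hres, hconv⟩, hmax⟩ := hR
  obtain ⟨hsub, hrefl, hanti, htrans⟩ := hpor
  have hyZ : y ∉ Z := fun h => hy (Or.inr h)
  have hZdown : ∀ z ∈ Z, (z, y) ∉ R := by
    intro z hz h
    have h1 : (z, y) ∈ restrict R (Z ∪ {y}) := ⟨h, Or.inl hz, Or.inr rfl⟩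
    rw [hres] at h1
    rcases h1 with h1 | h1
    · exact hyZ (hQ.1 h1).2
    · have h2 : z = y := congrArg Prod.fst h1
      exact hyZ (h2 ▸ hz)
  have maxR : maxPts R = maxPts Q ∪ {y} := by
    rw [maxPts_union_single hQ hyZ] at hmax; exact hmax.symm
  have hymax : up R y = {y} := by
    have : y ∈ maxPts R := by rw [maxR]; exact Or.inr rfl
    exact this
  refine ⟨fun z hz => ⟨Or.inr hz, hZdown z hz⟩, ?_, ?_, ?_, maxR⟩
  · exact isPor_restrict ⟨hsub, hrefl, hanti, htrans⟩
      (Set.union_subset_union_right X Set.subset_union_left)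
  · rintro a b ⟨habR, haW, hbW⟩ ⟨_, hadown⟩
    exact ⟨hbW, fun hb => hadown (htrans a b y habR hb)⟩
  · ext ⟨a, b⟩
    constructor
    · intro hab
      have haW' := (hsub hab).1
      have hbW' := (hsub hab).2
      by_cases hby : b = y
      · refine Or.inr ⟨?_, hby⟩
        by_cases hay : a = y
        · exact Or.inr hay
        · refine Or.inl ⟨?_, ?_⟩
          · rcases haW' with h | h | h
            · exact Or.inl h
            · exact Or.inr h
            · exact absurd h hay
          · show (a, y) ∈ R
            rw [← hby]; exact hab
      · left
        have haY : a ≠ y := by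
          intro hay
          rw [hay] at hab
          have hb' : b ∈ up R y := hab
          rw [hymax] at hb'
          exact hby hb'
        refine ⟨hab, ?_, ?_⟩
        · rcases haW' with h | h | h
          · exact Or.inl h
          · exact Or.inr h
          · exact absurd h haY
        · rcases hbW' with h | h | h
          · exact Or.inl h
          · exact Or.inr h
          · exact absurd h hby
    · rintro (⟨h, _, _⟩ | ⟨ha, hb⟩)
      · exact h
      · have hby : b = y := hb
        rcases ha with ⟨_, h⟩ | h
        · show (a, b) ∈ R
          rw [hby]; exact h
        · have hay : a = y := h
          show (a, b) ∈ R
          rw [hby, hay]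
          exact hrefl y (Or.inr (Or.inr rfl))

lemma sigma_mapsTo {X Z : Set α} (hXZ : Disjoint X Z) {Q : Set (α × α)} (hQ : IsPor Z Q)
    {y : α} (hy : y ∉ X ∪ Z) {R : Set (α × α)}
    (hR : R ∈ MstarSet (Q ∪ {(y, y)}) X (Z ∪ {y})) :
    tau ((X ∪ Z) ∩ down R y) ((X ∪ Z) \ down R y) (restrict R (X ∪ Z)) ∈
      Cset (dual Q) X Z := by
  obtain ⟨hZU, hporW, hUE, hdec, maxR⟩ := domain_facts hQ hy hR
  obtain ⟨⟨hpor, hres, hconv⟩, hmax⟩ := hR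
  have hyZ : y ∉ Z := fun h => hy (Or.inr h)
  set D := (X ∪ Z) ∩ down R y with hD
  set U := (X ∪ Z) \ down R y with hU
  have hDU : Disjoint D U := Set.disjoint_left.mpr fun x hxD hxU => hxU.2 hxD.2
  have hDUU : D ∪ U = X ∪ Z := Set.inter_union_diff _ _
  have hporDU : IsPor (D ∪ U) (restrict R (X ∪ Z)) := by rw [hDUU]; exact hporW
  obtain ⟨htpor, htUE⟩ := tau_isPor hDU hporDU hUE
  rw [hDUU] at htpor
  have hQR : Q ⊆ R := by
    intro p hp
    have : p ∈ restrict R (Z ∪ {y}) := by rw [hres]; exact Or.inl hp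
    exact this.1
  refine ⟨htpor, ?_, ?_⟩
  · ext ⟨a, b⟩
    constructor
    · rintro ⟨htau, haZ, hbZ⟩
      have haU : a ∈ U := hZU haZ
      have hbU : b ∈ U := hZU hbZ
      rcases mem_tau.mp htau with ⟨_, hb', _⟩ | ⟨⟨ha', _⟩, _⟩ | ⟨h, _, _⟩
      · exact (Set.disjoint_left.mp hDU hb' hbU).elim
      · exact (Set.disjoint_left.mp hDU ha' haU).elim
      · have h1 : (b, a) ∈ restrict R (Z ∪ {y}) := ⟨h.1, Or.inl hbZ, Or.inl haZ⟩
        rw [hres] at h1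
        rcases h1 with h1 | h1
        · exact h1
        · have h2 : b = y := congrArg Prod.fst h1
          exact absurd (h2 ▸ hbZ) hyZ
    · intro h
      have h' : (b, a) ∈ Q := h
      have hbZ : b ∈ Z := (hQ.1 h').1
      have haZ : a ∈ Z := (hQ.1 h').2
      refine ⟨mem_tau.mpr (Or.inr (Or.inr ⟨⟨hQR h', Or.inr hbZ, Or.inr haZ⟩,
        hZU hbZ, hZU haZ⟩)), haZ, hbZ⟩
  · intro a b x haZ hbZ hax hxb
    have haU : a ∈ U := hZU haZ
    rcases mem_tau.mp hax with ⟨_, _, ha'⟩ | ⟨⟨ha', _⟩, _⟩ | ⟨h1, hx', _⟩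
    · exact (Set.disjoint_left.mp hDU ha' haU).elim
    · exact (Set.disjoint_left.mp hDU ha' haU).elim
    · rcases mem_tau.mp hxb with ⟨_, _, hx''⟩ | ⟨⟨hx'', _⟩, _⟩ | ⟨h2, _, _⟩
      · exact (Set.disjoint_left.mp hDU hx'' hx').elim
      · exact (Set.disjoint_left.mp hDU hx'' hx').elim
      · have hx : x ∈ Z ∪ {y} := hconv b a x (Or.inl hbZ) (Or.inl haZ) h2.1 h1.1
        rcases hx with hx | hx
        · exact hx
        · have : x = y := hx
          exact absurd (this ▸ hx'.1) hy

/-- The inverse of `σ`. -/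
def sigmaInv (Q : Set (α × α)) (X Z : Set α) (y : α) (S : Set (α × α)) :
    Set (α × α) :=
  tau ((X ∪ Z) \ upSet S (maxPts Q)) ((X ∪ Z) ∩ upSet S (maxPts Q)) S ∪
    (((X ∪ Z) \ upSet S (maxPts Q)) ∪ {y}) ×ˢ {y}

lemma maxPts_subset {Z : Set α} {Q : Set (α × α)} (hQ : IsPor Z Q) :
    maxPts Q ⊆ Z := by
  intro m hm
  have h1 : m ∈ up Q m := by rw [hm]; exact rfl
  exact (hQ.1 h1).1

lemma codomain_facts {X Z : Set α} (hZ : Z.Finite) (hXZ : Disjoint X Z)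
    {Q : Set (α × α)} (hQ : IsPor Z Q) {y : α} (hy : y ∉ X ∪ Z)
    {S : Set (α × α)} (hS : S ∈ Cset (dual Q) X Z) :
    sigmaInv Q X Z y S ∈ MstarSet (Q ∪ {(y, y)}) X (Z ∪ {y}) ∧
    tau ((X ∪ Z) ∩ down (sigmaInv Q X Z y S) y)
      ((X ∪ Z) \ down (sigmaInv Q X Z y S) y)
      (restrict (sigmaInv Q X Z y S) (X ∪ Z)) = S := by
  obtain ⟨hpor, hres, hconv⟩ := hS
  obtain ⟨hsub, hrefl, hanti, htrans⟩ := hpor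
  have hyZ : y ∉ Z := fun h => hy (Or.inr h)
  have hmaxZ : maxPts Q ⊆ Z := maxPts_subset hQ
  have hQS : ∀ a b, (a, b) ∈ Q → (b, a) ∈ S := by
    intro a b h
    have h1 : (b, a) ∈ dual Q := h
    rw [← hres] at h1
    exact h1.1
  have hSQ : ∀ a b, a ∈ Z → b ∈ Z → (a, b) ∈ S → (b, a) ∈ Q := by
    intro a b ha hb h
    have h1 : (a, b) ∈ restrict S Z := ⟨h, ha, hb⟩
    rw [hres] at h1
    exact h1
  set U : Set α := (X ∪ Z) ∩ upSet S (maxPts Q) with hUdef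
  set D : Set α := (X ∪ Z) \ upSet S (maxPts Q) with hDdef
  have hZU : Z ⊆ U := by
    intro z hz
    obtain ⟨m, hzm, hm⟩ := exists_max_above hZ hQ z hz
    exact ⟨Or.inr hz, ⟨m, hm, hQS z m hzm⟩⟩
  have hDX : D ⊆ X := by
    intro x hx
    rcases hx.1 with h | h
    · exact h
    · exact absurd (hZU h).2 hx.2
  have hDU : Disjoint D U := Set.disjoint_left.mpr fun x hxD hxU => hxD.2 hxU.2
  have hDUU : D ∪ U = X ∪ Z := Set.diff_union_inter _ _
  have hMU : maxPts Q ⊆ U := fun m hm => hZU (hmaxZ hm)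
  have hUE : IsUpperEnd S U := by
    rintro a b hab ⟨haW, m, hm, hma⟩
    exact ⟨(hsub hab).2, ⟨m, hm, htrans m a b hma hab⟩⟩
  have hporDU : IsPor (D ∪ U) S := by rw [hDUU]; exact ⟨hsub, hrefl, hanti, htrans⟩
  obtain ⟨htpor, htUE⟩ := tau_isPor hDU hporDU hUE
  rw [hDUU] at htpor
  set T : Set (α × α) := tau D U S with hTdef
  have htsub : T ⊆ (X ∪ Z) ×ˢ (X ∪ Z) := htpor.1
  set R' : Set (α × α) := sigmaInv Q X Z y S with hR'def
  have hR'eq : R' = T ∪ (D ∪ {y}) ×ˢ {y} := rfl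
  have hmemR' : ∀ p : α × α, p ∈ R' ↔ p ∈ T ∨ (p.1 ∈ D ∪ {y} ∧ p.2 = y) :=
    fun p => Iff.rfl
  have hdown : down R' y = D ∪ {y} := by
    ext x
    constructor
    · intro hx
      rcases (hmemR' (x, y)).mp hx with h | h
      · exact absurd (htsub h).2 hy
      · exact h.1
    · intro hx
      exact (hmemR' (x, y)).mpr (Or.inr ⟨hx, rfl⟩)
  have hDcap : (X ∪ Z) ∩ down R' y = D := by
    rw [hdown]
    ext x
    constructor
    · rintro ⟨hxW, hx | hx⟩
      · exact hx
      · exact absurd (hx ▸ hxW) hy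
    · intro hx
      exact ⟨hx.1, Or.inl hx⟩
  have hUcap : (X ∪ Z) \ down R' y = U := by
    rw [hdown]
    ext x
    constructor
    · rintro ⟨hxW, hx⟩
      have hxW' : x ∈ D ∪ U := hDUU.symm ▸ hxW
      rcases hxW' with h | h
      · exact absurd (Or.inl h) hx
      · exact h
    · intro hx
      refine ⟨hx.1, ?_⟩
      rintro (h | h)
      · exact Set.disjoint_left.mp hDU h hx
      · exact hy (h ▸ hx.1)
  have hrestr : restrict R' (X ∪ Z) = T := by
    ext ⟨a, b⟩
    constructor
    · rintro ⟨h, hw1, hw2⟩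
      rcases (hmemR' (a, b)).mp h with h | h
      · exact h
      · exact absurd (h.2 ▸ hw2) hy
    · intro h
      exact ⟨Or.inl h, (htsub h).1, (htsub h).2⟩
  constructor
  · refine ⟨⟨?_, ?_, ?_⟩, ?_⟩
    · -- IsPor (X ∪ (Z ∪ {y})) R'
      have hWy : X ∪ (Z ∪ {y}) = (X ∪ Z) ∪ {y} := by
        rw [Set.union_assoc]
      rw [hWy]
      refine ⟨?_, ?_, ?_, ?_⟩
      · rintro ⟨a, b⟩ h
        rcases (hmemR' (a, b)).mp h with h | ⟨ha, hb⟩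
        · exact ⟨Or.inl (htsub h).1, Or.inl (htsub h).2⟩
        · refine ⟨?_, Or.inr hb⟩
          rcases ha with h' | h'
          · exact Or.inl (Or.inl (hDX h'))
          · exact Or.inr h'
      · rintro x (hx | hx)
        · exact (hmemR' (x, x)).mpr (Or.inl (htpor.2.1 x hx))
        · exact (hmemR' (x, x)).mpr (Or.inr ⟨Or.inr hx, hx⟩)
      · intro a b h1 h2
        rcases (hmemR' (a, b)).mp h1 with h1' | ⟨ha1, hb1⟩ <;>
          rcases (hmemR' (b, a)).mp h2 with h2' | ⟨hb2, ha2⟩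
        · exact htpor.2.2.1 a b h1' h2'
        · exact absurd (ha2 ▸ (htsub h1').1) hy
        · exact absurd (hb1 ▸ (htsub h2').1) hy
        · exact ha2.trans hb1.symm
      · intro a b c h1 h2
        rcases (hmemR' (a, b)).mp h1 with h1' | ⟨ha1, hb1⟩
        · rcases (hmemR' (b, c)).mp h2 with h2' | ⟨hb2, hc2⟩
          · exact (hmemR' (a, c)).mpr (Or.inl (htpor.2.2.2 a b c h1' h2'))
          · have hbW : b ∈ X ∪ Z := (htsub h1').2
            have hbD : b ∈ D := by
              rcases hb2 with h | h
              · exact h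
              · exact absurd (h ▸ hbW) hy
            have haD : a ∈ D := by
              rcases mem_tau.mp h1' with ⟨_, _, h⟩ | ⟨⟨_, h⟩, _⟩ | ⟨_, h, _⟩
              · exact h
              · exact (Set.disjoint_left.mp hDU hbD h).elim
              · exact (Set.disjoint_left.mp hDU hbD h).elim
            exact (hmemR' (a, c)).mpr (Or.inr ⟨Or.inl haD, hc2⟩)
        · rcases (hmemR' (b, c)).mp h2 with h2' | ⟨hb2, hc2⟩
          · exact absurd (hb1 ▸ (htsub h2').1) hy
          · exact (hmemR' (a, c)).mpr (Or.inr ⟨ha1, hc2⟩)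
    · -- restrict R' (Z ∪ {y}) = Q ∪ {(y, y)}
      ext ⟨a, b⟩
      constructor
      · rintro ⟨h, ha, hb⟩
        rcases (hmemR' (a, b)).mp h with h | ⟨ha', hb'⟩
        · have haW : a ∈ X ∪ Z := (htsub h).1
          have hbW : b ∈ X ∪ Z := (htsub h).2
          have haZ : a ∈ Z := by
            rcases ha with h' | h'
            · exact h'
            · exact absurd (h' ▸ haW) hy
          have hbZ : b ∈ Z := by
            rcases hb with h' | h'
            · exact h'
            · exact absurd (h' ▸ hbW) hy
          rcases mem_tau.mp h with ⟨_, hb'', _⟩ | ⟨⟨ha'', _⟩, _⟩ | ⟨h3, _, _⟩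
          · exact (Set.disjoint_left.mp hDU hb'' (hZU hbZ)).elim
          · exact (Set.disjoint_left.mp hDU ha'' (hZU haZ)).elim
          · exact Or.inl (hSQ b a hbZ haZ h3)
        · rcases ha' with h' | h'
          · rcases ha with h'' | h''
            · exact (Set.disjoint_left.mp hXZ (hDX h') h'').elim
            · exact absurd (h'' ▸ (Or.inl (hDX h') : a ∈ X ∪ Z)) hy
          · have hay : a = y := h'
            right
            have hby : b = y := hb'
            show (a, b) = (y, y)
            rw [hay, hby]
      · rintro (h | h)
        · have haZ : a ∈ Z := (hQ.1 h).1
          have hbZ : b ∈ Z := (hQ.1 h).2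
          refine ⟨(hmemR' (a, b)).mpr (Or.inl (mem_tau.mpr (Or.inr (Or.inr
            ⟨hQS a b h, hZU hbZ, hZU haZ⟩)))), Or.inl haZ, Or.inl hbZ⟩
        · have hay : a = y := congrArg Prod.fst h
          have hby : b = y := congrArg Prod.snd h
          exact ⟨(hmemR' (a, b)).mpr (Or.inr ⟨Or.inr hay, hby⟩),
            Or.inr hay, Or.inr hby⟩
    · -- IsConvex R' (Z ∪ {y})
      intro a b x ha hb hax hxb
      rcases (hmemR' (a, x)).mp hax with h1 | ⟨_, hx1⟩
      · have haW : a ∈ X ∪ Z := (htsub h1).1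
        have haZ : a ∈ Z := by
          rcases ha with h' | h'
          · exact h'
          · exact absurd (h' ▸ haW) hy
        have haU : a ∈ U := hZU haZ
        rcases mem_tau.mp h1 with ⟨_, _, h⟩ | ⟨⟨h, _⟩, _⟩ | ⟨h1', hx', _⟩
        · exact (Set.disjoint_left.mp hDU h haU).elim
        · exact (Set.disjoint_left.mp hDU h haU).elim
        · rcases (hmemR' (x, b)).mp hxb with h2 | ⟨hx'', hb2⟩
          · rcases mem_tau.mp h2 with ⟨_, _, h⟩ | ⟨⟨h, _⟩, _⟩ | ⟨h2', hb', _⟩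
            · exact (Set.disjoint_left.mp hDU h hx').elim
            · exact (Set.disjoint_left.mp hDU h hx').elim
            · have hbW : b ∈ X ∪ Z := hb'.1
              have hbZ : b ∈ Z := by
                rcases hb with h' | h'
                · exact h'
                · exact absurd (h' ▸ hbW) hy
              exact Or.inl (hconv b a x hbZ haZ h2' h1')
          · rcases hx'' with h | h
            · exact (Set.disjoint_left.mp hDU h hx').elim
            · exact Or.inr h
      · exact Or.inr hx1
    · -- maxPts (Q ∪ {(y, y)}) = maxPts R'
      rw [maxPts_union_single hQ hyZ]
      ext x
      constructor
      · rintro (hm | hxy)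
        · -- x ∈ maxPts Q
          have hxZ : x ∈ Z := hmaxZ hm
          have hxU : x ∈ U := hZU hxZ
          show up R' x = {x}
          ext w
          constructor
          · intro hw
            rcases (hmemR' (x, w)).mp hw with h | ⟨hx', _⟩
            · rcases mem_tau.mp h with ⟨_, _, h'⟩ | ⟨⟨h', _⟩, _⟩ | ⟨h3, hwU, _⟩
              · exact (Set.disjoint_left.mp hDU h' hxU).elim
              · exact (Set.disjoint_left.mp hDU h' hxU).elim
              · obtain ⟨hwW, m', hm', hm'w⟩ := hwU
                have hm'x : (m', x) ∈ S := htrans m' w x hm'w h3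
                have hxm' : (x, m') ∈ Q := hSQ m' x (hmaxZ hm') hxZ hm'x
                have : m' ∈ up Q x := hxm'
                rw [hm] at this
                have hm'eq : m' = x := this
                have hxw : (x, w) ∈ S := hm'eq ▸ hm'w
                exact Set.mem_singleton_iff.mpr (hanti x w hxw h3).symm
            · rcases hx' with h | h
              · exact (Set.disjoint_left.mp hDU h hxU).elim
              · exact absurd (h ▸ (Or.inr hxZ : x ∈ X ∪ Z)) hy
          · intro hw
            have hwx : w = x := hw
            rw [hwx]
            exact (hmemR' (x, x)).mpr (Or.inl (htpor.2.1 x (Or.inr hxZ)))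
        · -- x = y
          have hxy' : x = y := hxy
          show up R' x = {x}
          rw [hxy']
          ext w
          constructor
          · intro hw
            rcases (hmemR' (y, w)).mp hw with h | ⟨_, hw'⟩
            · exact absurd (htsub h).1 hy
            · exact hw'
          · intro hw
            have hwy : w = y := hw
            rw [hwy]
            exact (hmemR' (y, y)).mpr (Or.inr ⟨Or.inr rfl, rfl⟩)
      · intro hx
        have hx' : up R' x = {x} := hx
        have hxx : (x, x) ∈ R' := by
          have : x ∈ up R' x := by rw [hx']; exact rfl
          exact this
        rcases (hmemR' (x, x)).mp hxx with h | ⟨_, hx2⟩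
        · have hxW : x ∈ X ∪ Z := (htsub h).1
          have hxW' : x ∈ D ∪ U := hDUU.symm ▸ hxW
          rcases hxW' with hxD | hxU
          · exfalso
            have hxy : (x, y) ∈ R' := (hmemR' (x, y)).mpr (Or.inr ⟨Or.inl hxD, rfl⟩)
            have : y ∈ up R' x := hxy
            rw [hx'] at this
            have : y = x := this
            exact hy (this ▸ hxW)
          · obtain ⟨_, m, hm, hmx⟩ := id hxU
            have hmU : m ∈ U := hMU hm
            have hxm : (x, m) ∈ R' := (hmemR' (x, m)).mpr
              (Or.inl (mem_tau.mpr (Or.inr (Or.inr ⟨hmx, hmU, hxU⟩))))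
            have : m ∈ up R' x := hxm
            rw [hx'] at this
            have hmx' : m = x := this
            exact Or.inl (hmx' ▸ hm)
        · exact Or.inr hx2
  · rw [hDcap, hUcap, hrestr]
    exact tau_tau hDU hporDU hUE

lemma sigma_leftInv {X Z : Set α} (hX : X.Finite) (hZ : Z.Finite)
    (hXZ : Disjoint X Z) {Q : Set (α × α)} (hQ : IsPor Z Q) {y : α}
    (hy : y ∉ X ∪ Z) {R : Set (α × α)}
    (hR : R ∈ MstarSet (Q ∪ {(y, y)}) X (Z ∪ {y})) :
    sigmaInv Q X Z y
      (tau ((X ∪ Z) ∩ down R y) ((X ∪ Z) \ down R y) (restrict R (X ∪ Z))) = R := by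
  obtain ⟨hZU, hporW, hUE, hdec, maxR⟩ := domain_facts hQ hy hR
  obtain ⟨⟨hporR, hres, hconv⟩, hmax⟩ := hR
  have hyZ : y ∉ Z := fun h => hy (Or.inr h)
  have hmaxZ : maxPts Q ⊆ Z := maxPts_subset hQ
  set D : Set α := (X ∪ Z) ∩ down R y with hDdef
  set U : Set α := (X ∪ Z) \ down R y with hUdef
  have hDU : Disjoint D U := Set.disjoint_left.mpr fun x hxD hxU => hxU.2 hxD.2
  have hDUU : D ∪ U = X ∪ Z := Set.inter_union_diff _ _
  have hporDU : IsPor (D ∪ U) (restrict R (X ∪ Z)) := by rw [hDUU]; exact hporW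
  set T : Set (α × α) := tau D U (restrict R (X ∪ Z)) with hTdef
  obtain ⟨htpor, htUE⟩ := tau_isPor hDU hporDU hUE
  rw [hDUU] at htpor
  have hfin : (X ∪ (Z ∪ {y})).Finite := hX.union (hZ.union (Set.finite_singleton y))
  have hUup : U ⊆ upSet T (maxPts Q) := by
    intro u hu
    obtain ⟨m, hum, hm⟩ := exists_max_above hfin hporR u
      (by rcases hu.1 with h | h
          · exact Or.inl h
          · exact Or.inr (Or.inl h))
    rw [maxR] at hm
    rcases hm with hm | hm
    · have hmZ : m ∈ Z := hmaxZ hm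
      have hmU : m ∈ U := hZU hmZ
      refine ⟨m, hm, ?_⟩
      exact mem_tau.mpr (Or.inr (Or.inr ⟨⟨hum, hu.1, Or.inr hmZ⟩, hu, hmU⟩))
    · exfalso
      have hmy : m = y := hm
      exact hu.2 (hmy ▸ hum)
  have hDup : ∀ d ∈ D, d ∉ upSet T (maxPts Q) := by
    rintro d hd ⟨m, hm, hmd⟩
    have hmU : m ∈ U := hZU (hmaxZ hm)
    rcases mem_tau.mp hmd with ⟨_, hd', hm'⟩ | ⟨⟨hm', _⟩, _⟩ | ⟨_, hd', _⟩
    · exact Set.disjoint_left.mp hDU hm' hmU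
    · exact Set.disjoint_left.mp hDU hm' hmU
    · exact Set.disjoint_left.mp hDU hd hd'
  have hU' : (X ∪ Z) ∩ upSet T (maxPts Q) = U := by
    ext x
    constructor
    · rintro ⟨hxW, hxup⟩
      have hxW' : x ∈ D ∪ U := hDUU.symm ▸ hxW
      rcases hxW' with h | h
      · exact absurd hxup (hDup x h)
      · exact h
    · intro hx
      exact ⟨hx.1, hUup hx⟩
  have hD' : (X ∪ Z) \ upSet T (maxPts Q) = D := by
    ext x
    constructor
    · rintro ⟨hxW, hxup⟩
      have hxW' : x ∈ D ∪ U := hDUU.symm ▸ hxW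
      rcases hxW' with h | h
      · exact h
      · exact absurd (hUup h) hxup
    · intro hx
      exact ⟨hx.1, hDup x hx⟩
  show tau ((X ∪ Z) \ upSet T (maxPts Q)) ((X ∪ Z) ∩ upSet T (maxPts Q)) T ∪
      (((X ∪ Z) \ upSet T (maxPts Q)) ∪ {y}) ×ˢ {y} = R
  rw [hD', hU', hTdef, tau_tau hDU hporDU hUE, ← hdec]

end Aux

/-- With `W = X ∪ Z`, the mapping
`σ : 𝔐*_{Q+A_y}(X, Z ∪ {y}) → ℭ_{Q^d}(X, Z)`,
`σ(R) = τ_{W ∩ ↓_R y, W \ ↓_R y}(R|_W)`, is a well-defined bijection. -/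
theorem stmt11 {α : Type*} (X Z : Set α) (hX : X.Finite) (hZ : Z.Finite)
    (hXZ : Disjoint X Z) (Q : Set (α × α)) (hQ : IsPor Z Q)
    (y : α) (hy : y ∉ X ∪ Z) :
    Set.BijOn
      (fun R => tau ((X ∪ Z) ∩ down R y) ((X ∪ Z) \ down R y)
        (restrict R (X ∪ Z)))
      (MstarSet (Q ∪ {(y, y)}) X (Z ∪ {y})) (Cset (dual Q) X Z) := by
  refine Set.InvOn.bijOn (f' := sigmaInv Q X Z y) ⟨?_, ?_⟩ ?_ ?_
  · intro R hR
    exact sigma_leftInv hX hZ hXZ hQ hy hR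
  · intro S hS
    exact (codomain_facts hZ hXZ hQ hy hS).2
  · intro R hR
    exact sigma_mapsTo hXZ hQ hy hR
  · intro S hS
    exact (codomain_facts hZ hXZ hQ hy hS).1

end Erne
end

section
/- Let X, Y be finite disjoint sets and Q ∈ 𝔓(Y). The family of sets ℭ_G(X \ c(G), c(G)), indexed by G ∈ 𝔊_Q(X), forms a partition of ℑ_Q(X,Y): each such set is nonempty, every R ∈ ℑ_Q(X,Y) lies in exactly one of them (namely the one with G = R|_{γ_R(Y)}). -/
namespace Erne

variable {α : Type*}

theorem porCarrier {X : Set α} {R : Set (α × α)} (h : IsPor X R) :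
    carrier R = X := by
  ext x
  exact ⟨fun hx => (h.1 hx).1, fun hx => h.2.1 x hx⟩

theorem restrict_restrict_of_subset {R : Set (α × α)} {Y Z : Set α}
    (h : Y ⊆ Z) : restrict (restrict R Z) Y = restrict R Y := by
  ext ⟨a, b⟩
  simp only [restrict, Set.mem_inter_iff, Set.mem_prod]
  tauto

theorem por_restrict {W Z : Set α} {R : Set (α × α)} (h : IsPor W R)
    (hZW : Z ⊆ W) : IsPor Z (restrict R Z) := by
  obtain ⟨hsub, hrefl, hanti, htrans⟩ := h
  refine ⟨Set.inter_subset_right, fun x hx => ⟨hrefl x (hZW hx), hx, hx⟩,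
    fun x y hxy hyx => hanti x y hxy.1 hyx.1,
    fun x y z hxy hyz => ⟨htrans x y z hxy.1 hyz.1, hxy.2.1, hyz.2.2⟩⟩

/-- The sets `ℭ_G(X \ c(G), c(G))`, `G ∈ 𝔊_Q(X)`, form a
partition of `ℑ_Q(X,Y)`: each is a nonempty subset of `ℑ_Q(X,Y)`, and every
`R ∈ ℑ_Q(X,Y)` lies in exactly one of them, namely the one with `G = R|_{γ_R(Y)}`. -/
theorem stmt12 {α : Type*} (X Y : Set α) (hX : X.Finite) (hY : Y.Finite)
    (hXY : Disjoint X Y) (Q : Set (α × α)) (hQ : IsPor Y Q) :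
    (∀ G ∈ Gset Q X Y, (Cset G (X \ carrier G) (carrier G)).Nonempty ∧
        Cset G (X \ carrier G) (carrier G) ⊆ Iset Q X Y) ∧
    ∀ R ∈ Iset Q X Y,
      restrict R (gamma R Y) ∈ Gset Q X Y ∧
      R ∈ Cset (restrict R (gamma R Y)) (X \ gamma R Y) (gamma R Y) ∧
      ∀ G ∈ Gset Q X Y, R ∈ Cset G (X \ carrier G) (carrier G) →
        G = restrict R (gamma R Y) := by
  constructor
  · -- part 1
    rintro G ⟨M, hMX, ⟨⟨hGpor, hGQ⟩, hGgamma⟩⟩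
    have hcG : carrier G = M ∪ Y := porCarrier hGpor
    have hYcG : Y ⊆ carrier G := hcG ▸ Set.subset_union_right
    have hcGXY : carrier G ⊆ X ∪ Y := by
      rw [hcG]; exact Set.union_subset_union_left Y hMX
    have hunion : (X \ carrier G) ∪ carrier G = X ∪ Y := by
      apply Set.Subset.antisymm
      · rintro x (hx | hx)
        · exact Or.inl hx.1
        · exact hcGXY hx
      · intro x hx
        by_cases h : x ∈ carrier G
        · exact Or.inr h
        · rcases hx with hx | hx
          · exact Or.inl ⟨hx, h⟩
          · exact absurd (hYcG hx) h
    obtain ⟨hGsub, hGrefl, hGanti, hGtrans⟩ := hGpor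
    have hGsub' : G ⊆ carrier G ×ˢ carrier G := by rw [hcG]; exact hGsub
    constructor
    · -- nonemptiness
      refine ⟨G ∪ diag (X \ carrier G), ⟨?_, ?_, ?_, ?_⟩, ?_, ?_⟩
      · rintro ⟨a, b⟩ (h | h)
        · have := hGsub' h
          exact ⟨Or.inr this.1, Or.inr this.2⟩
        · obtain ⟨heq, hmem⟩ := h
          exact ⟨Or.inl hmem, Or.inl (heq ▸ hmem)⟩
      · rintro x (hx | hx)
        · exact Or.inr ⟨rfl, hx⟩
        · exact Or.inl hx
      · rintro x y (hxy | hxy) (hyx | hyx)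
        · exact hGanti x y hxy hyx
        · exact hyx.1.symm
        · exact hxy.1
        · exact hxy.1
      · rintro x y z (hxy | hxy) (hyz | hyz)
        · exact Or.inl (hGtrans x y z hxy hyz)
        · have : y = z := hyz.1
          exact Or.inl (this ▸ hxy)
        · have : x = y := hxy.1
          exact Or.inl (this ▸ hyz)
        · exact Or.inr ⟨hxy.1.trans hyz.1, hxy.2⟩
      · -- restriction equals G
        apply Set.Subset.antisymm
        · rintro ⟨a, b⟩ ⟨h | h, hab⟩
          · exact h
          · exact absurd hab.1 (fun hc => h.2.2 hc)
        · intro p hp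
          exact ⟨Or.inl hp, hGsub' hp⟩
      · -- convexity
        rintro a b x ha hb (hax | hax) _
        · exact (hGsub' hax).2
        · exact absurd ha hax.2.2
    · -- subset of Iset
      rintro R ⟨hRpor, hRres, -⟩
      rw [hunion] at hRpor
      refine ⟨hRpor, ?_⟩
      have := restrict_restrict_of_subset (R := R) hYcG
      rw [hRres] at this
      rw [← this, hGQ]
  · -- part 2
    rintro R ⟨hRpor, hRQ⟩
    set Γ := gamma R Y with hΓ
    obtain ⟨hRsub, hRrefl, hRanti, hRtrans⟩ := hRpor
    have hYΓ : Y ⊆ Γ := by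
      intro y hy
      have : (y, y) ∈ R := hRrefl y (Or.inr hy)
      exact ⟨y, hy, y, hy, this, this⟩
    have hΓXY : Γ ⊆ X ∪ Y := by
      rintro x ⟨m, hm, n, hn, hmx, hxn⟩
      exact (hRsub hmx).2
    have hporΓ : IsPor Γ (restrict R Γ) :=
      por_restrict ⟨hRsub, hRrefl, hRanti, hRtrans⟩ hΓXY
    have hresY : restrict (restrict R Γ) Y = Q := by
      rw [restrict_restrict_of_subset hYΓ, hRQ]
    have hMuY : (Γ ∩ X) ∪ Y = Γ := by
      apply Set.Subset.antisymm
      · rintro x (hx | hx)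
        · exact hx.1
        · exact hYΓ hx
      · intro x hx
        rcases hΓXY hx with h | h
        · exact Or.inl ⟨hx, h⟩
        · exact Or.inr h
    have hcarΓ : carrier (restrict R Γ) = Γ := porCarrier hporΓ
    have hGmem : restrict R Γ ∈ Gset Q X Y := by
      refine ⟨Γ ∩ X, Set.inter_subset_right, ⟨?_, hresY⟩, ?_⟩
      · rw [hMuY]; exact hporΓ
      rw [hcarΓ]
      apply Set.Subset.antisymm
      · rintro x ⟨m, hm, n, hn, hmx, hxn⟩
        exact hmx.2.2
      · rintro x hx
        obtain ⟨m, hm, n, hn, hmx, hxn⟩ := id hx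
        exact ⟨m, hm, n, hn, ⟨hmx, hYΓ hm, hx⟩, ⟨hxn, hx, hYΓ hn⟩⟩
    refine ⟨hGmem, ⟨?_, rfl, ?_⟩, ?_⟩
    · -- R is por on (X \ Γ) ∪ Γ
      have : (X \ Γ) ∪ Γ = X ∪ Y := by
        apply Set.Subset.antisymm
        · rintro x (hx | hx)
          · exact Or.inl hx.1
          · exact hΓXY hx
        · intro x hx
          by_cases h : x ∈ Γ
          · exact Or.inr h
          · rcases hx with hx | hx
            · exact Or.inl ⟨hx, h⟩
            · exact absurd (hYΓ hx) h
      rw [this]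
      exact ⟨hRsub, hRrefl, hRanti, hRtrans⟩
    · -- Γ convex in R
      rintro a b x ⟨m, hm, n, hn, hma, han⟩ ⟨m', hm', n', hn', hmb, hbn⟩ hax hxb
      exact ⟨m, hm, n', hn', hRtrans m a x hma hax, hRtrans x b n' hxb hbn⟩
    · -- uniqueness
      rintro G ⟨M, hMX, ⟨⟨hGpor, hGQ⟩, hGgamma⟩⟩ ⟨hRpor', hRres, hRconv⟩
      have hYcG : Y ⊆ carrier G := by
        intro y hy
        have : (y, y) ∈ Q := hQ.2.1 y hy
        rw [← hGQ] at this
        exact this.1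
      have hcGΓ : carrier G = Γ := by
        apply Set.Subset.antisymm
        · intro x hx
          rw [← hGgamma] at hx
          obtain ⟨m, hm, n, hn, hmx, hxn⟩ := hx
          rw [← hRres] at hmx hxn
          exact ⟨m, hm, n, hn, hmx.1, hxn.1⟩
        · rintro x ⟨m, hm, n, hn, hmx, hxn⟩
          exact hRconv m n x (hYcG hm) (hYcG hn) hmx hxn
      rw [← hRres, hcGΓ]

end Erne
end

section
/- Let X, Z be finite disjoint sets, Q ∈ 𝔓(Z), and let y be a point not contained in X ∪ Z. Then 𝔊_{Q+A_y}(X) = {G + A_y : G ∈ 𝔊_Q(X)}, i.e., a p.o.r. G' belongs to 𝔊_{Q+A_y}(X) if and only if G' = G + A_y for some G ∈ 𝔊_Q(X). -/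
namespace Erne

variable {α : Type*}

section Aux

variable {α : Type*}

lemma pair_eq {a b y : α} (h : (a, b) ∈ ({(y, y)} : Set (α × α))) :
    a = y ∧ b = y := by
  rw [Set.mem_singleton_iff, Prod.mk.injEq] at h
  exact h

/-- Forward direction: adding an isolated point. -/
lemma gset_add_point {X Z : Set α}
    {Q : Set (α × α)} (hQ : IsPor Z Q) {y : α} (hy : y ∉ X ∪ Z)
    {G : Set (α × α)} (hG : G ∈ Gset Q X Z) :
    G ∪ {(y, y)} ∈ Gset (Q ∪ {(y, y)}) X (Z ∪ {y}) := by
  obtain ⟨M, hMX, ⟨⟨hsub, hrefl, hanti, htrans⟩, hres⟩, hgam⟩ := hG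
  have hyX : y ∉ X := fun h => hy (Or.inl h)
  have hyZ : y ∉ Z := fun h => hy (Or.inr h)
  have hyMZ : y ∉ M ∪ Z := fun h => h.elim (fun h => hyX (hMX h)) hyZ
  have hGy : ∀ a b : α, (a, b) ∈ G → a ≠ y ∧ b ≠ y := by
    intro a b hp
    have h2 := hsub hp
    exact ⟨fun h => hyMZ (h ▸ h2.1), fun h => hyMZ (h ▸ h2.2)⟩
  refine ⟨M, hMX, ⟨⟨?_, ?_, ?_, ?_⟩, ?_⟩, ?_⟩
  · rintro ⟨a, b⟩ (hp | hp)
    · have h2 := hsub hp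
      exact ⟨h2.1.elim Or.inl (fun h => Or.inr (Or.inl h)),
        h2.2.elim Or.inl (fun h => Or.inr (Or.inl h))⟩
    · obtain ⟨rfl, rfl⟩ := pair_eq hp
      exact ⟨Or.inr (Or.inr rfl), Or.inr (Or.inr rfl)⟩
  · rintro x (hx | hx | hx)
    · exact Or.inl (hrefl x (Or.inl hx))
    · exact Or.inl (hrefl x (Or.inr hx))
    · rcases hx with rfl; exact Or.inr rfl
  · rintro a b (hab | hab) (hba | hba)
    · exact hanti a b hab hba
    · obtain ⟨rfl, rfl⟩ := pair_eq hba; rfl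
    · obtain ⟨rfl, rfl⟩ := pair_eq hab; rfl
    · obtain ⟨rfl, rfl⟩ := pair_eq hab; rfl
  · rintro a b c (hab | hab) (hbc | hbc)
    · exact Or.inl (htrans a b c hab hbc)
    · obtain ⟨hb1, hc1⟩ := pair_eq hbc
      exact absurd hb1 (hGy a b hab).2
    · obtain ⟨rfl, rfl⟩ := pair_eq hab; exact Or.inl hbc
    · obtain ⟨rfl, rfl⟩ := pair_eq hab; exact Or.inr hbc
  · -- restriction
    ext ⟨a, b⟩
    constructor
    · rintro ⟨hab | hab, ha, hb⟩
      · have ha' : a ≠ y := (hGy a b hab).1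
        have hb' : b ≠ y := (hGy a b hab).2
        have haZ : a ∈ Z := ha.resolve_right (fun h => ha' h)
        have hbZ : b ∈ Z := hb.resolve_right (fun h => hb' h)
        have : (a, b) ∈ restrict G Z := ⟨hab, haZ, hbZ⟩
        rw [hres] at this
        exact Or.inl this
      · exact Or.inr hab
    · rintro (hab | hab)
      · rw [← hres] at hab
        obtain ⟨hG', haZ, hbZ⟩ := hab
        exact ⟨Or.inl hG', Or.inl haZ, Or.inl hbZ⟩
      · obtain ⟨rfl, rfl⟩ := pair_eq hab
        exact ⟨Or.inr rfl, Or.inr rfl, Or.inr rfl⟩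
  · -- gamma
    ext x
    constructor
    · rintro ⟨m, hm, n, hn, hmx, hxn⟩
      rcases hmx with hmx | hmx
      · have hm' : m ∈ Z := hm.resolve_right (fun h => (hGy m x hmx).1 h)
        rcases hxn with hxn | hxn
        · have hn' : n ∈ Z := hn.resolve_right (fun h => (hGy x n hxn).2 h)
          have : x ∈ gamma G Z := ⟨m, hm', n, hn', hmx, hxn⟩
          rw [hgam] at this
          exact Or.inl this
        · obtain ⟨hx1, hn1⟩ := pair_eq hxn
          exact absurd hx1 (hGy m x hmx).2
      · obtain ⟨rfl, rfl⟩ := pair_eq hmx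
        exact Or.inr rfl
    · rintro (hx | hx)
      · have hx' : x ∈ gamma G Z := by rw [hgam]; exact hx
        obtain ⟨m, hm, n, hn, hmx, hxn⟩ := hx'
        exact ⟨m, Or.inl hm, n, Or.inl hn, Or.inl hmx, Or.inl hxn⟩
      · obtain ⟨hx1, -⟩ := pair_eq hx
        subst hx1
        exact ⟨x, Or.inr rfl, x, Or.inr rfl, Or.inr rfl, Or.inr rfl⟩

/-- Backward direction: removing the isolated point. -/
lemma gset_remove_point {X Z : Set α} (hXZ : Disjoint X Z)
    {Q : Set (α × α)} (hQ : IsPor Z Q) {y : α} (hy : y ∉ X ∪ Z)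
    {G' : Set (α × α)} (hG' : G' ∈ Gset (Q ∪ {(y, y)}) X (Z ∪ {y})) :
    G' \ {(y, y)} ∈ Gset Q X Z ∧ G' = (G' \ {(y, y)}) ∪ {(y, y)} := by
  obtain ⟨M, hMX, ⟨⟨hsub, hrefl, hanti, htrans⟩, hres⟩, hgam⟩ := hG'
  have hyX : y ∉ X := fun h => hy (Or.inl h)
  have hyZ : y ∉ Z := fun h => hy (Or.inr h)
  have hQsub := hQ.1
  have hyy : (y, y) ∈ G' := hrefl y (Or.inr (Or.inr rfl))
  -- y is not related to any element of Z
  have hZ1 : ∀ n ∈ Z, (y, n) ∉ G' := by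
    intro n hn hc
    have : (y, n) ∈ Q ∪ {(y, y)} := by
      rw [← hres]
      exact ⟨hc, Or.inr rfl, Or.inl hn⟩
    rcases this with h | h
    · exact hyZ (hQsub h).1
    · exact hyZ ((pair_eq h).2 ▸ hn)
  have hZ2 : ∀ n ∈ Z, (n, y) ∉ G' := by
    intro n hn hc
    have : (n, y) ∈ Q ∪ {(y, y)} := by
      rw [← hres]
      exact ⟨hc, Or.inl hn, Or.inr rfl⟩
    rcases this with h | h
    · exact hyZ (hQsub h).2
    · exact hyZ ((pair_eq h).1 ▸ hn)
  -- y is isolated in G'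
  have hiso1 : ∀ x, (x, y) ∈ G' → x = y := by
    intro x hxy
    by_contra hne
    have hxc : x ∈ carrier G' := hrefl x (hsub hxy).1
    rw [← hgam] at hxc
    obtain ⟨m, hm, n, hn, hmx, hxn⟩ := hxc
    rcases hm with hm | hm
    · exact hZ2 m hm (htrans m x y hmx hxy)
    · have hm' : m = y := hm
      rw [hm'] at hmx
      exact hne (hanti x y hxy hmx)
  have hiso2 : ∀ x, (y, x) ∈ G' → x = y := by
    intro x hyx
    by_contra hne
    have hxc : x ∈ carrier G' := hrefl x (hsub hyx).2
    rw [← hgam] at hxc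
    obtain ⟨m, hm, n, hn, hmx, hxn⟩ := hxc
    rcases hn with hn | hn
    · exact hZ1 n hn (htrans y x n hyx hxn)
    · have hn' : n = y := hn
      rw [hn'] at hxn
      exact hne (hanti x y hxn hyx)
  set G : Set (α × α) := G' \ {(y, y)} with hGdef
  -- membership in G
  have hGmem : ∀ a b : α, (a, b) ∈ G ↔ (a, b) ∈ G' ∧ a ≠ y ∧ b ≠ y := by
    intro a b
    constructor
    · rintro ⟨h1, h2⟩
      refine ⟨h1, ?_, ?_⟩
      · intro heq
        apply h2
        subst heq
        rw [Set.mem_singleton_iff, Prod.mk.injEq]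
        exact ⟨rfl, hiso2 b h1⟩
      · intro heq
        apply h2
        subst heq
        rw [Set.mem_singleton_iff, Prod.mk.injEq]
        exact ⟨hiso1 a h1, rfl⟩
    · rintro ⟨h1, h2, h3⟩
      refine ⟨h1, ?_⟩
      intro hc
      exact h2 (pair_eq hc).1
  have hunion : G' = G ∪ {(y, y)} := by
    ext ⟨a, b⟩
    constructor
    · intro h
      by_cases hc : (a, b) ∈ ({(y, y)} : Set (α × α))
      · exact Or.inr hc
      · exact Or.inl ⟨h, hc⟩
    · rintro (h | h)
      · exact h.1
      · obtain ⟨rfl, rfl⟩ := pair_eq h; exact hyy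
  refine ⟨⟨M, hMX, ⟨⟨?_, ?_, ?_, ?_⟩, ?_⟩, ?_⟩, hunion⟩
  · -- subset of (M ∪ Z) ×ˢ (M ∪ Z)
    rintro ⟨a, b⟩ hab
    rw [hGmem] at hab
    obtain ⟨hab, ha, hb⟩ := hab
    have h2 := hsub hab
    refine ⟨?_, ?_⟩
    · rcases h2.1 with h | h | h
      · exact Or.inl h
      · exact Or.inr h
      · exact absurd h ha
    · rcases h2.2 with h | h | h
      · exact Or.inl h
      · exact Or.inr h
      · exact absurd h hb
  · -- reflexive
    intro x hx
    have hxy : x ≠ y := by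
      rintro rfl
      rcases hx with h | h
      · exact hyX (hMX h)
      · exact hyZ h
    rw [hGmem]
    refine ⟨hrefl x ?_, hxy, hxy⟩
    rcases hx with h | h
    · exact Or.inl h
    · exact Or.inr (Or.inl h)
  · -- antisymmetric
    intro a b hab hba
    rw [hGmem] at hab hba
    exact hanti a b hab.1 hba.1
  · -- transitive
    intro a b c hab hbc
    rw [hGmem] at hab hbc ⊢
    exact ⟨htrans a b c hab.1 hbc.1, hab.2.1, hbc.2.2⟩
  · -- restriction
    ext ⟨a, b⟩
    constructor
    · rintro ⟨hab, ha, hb⟩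
      rw [hGmem] at hab
      have : (a, b) ∈ Q ∪ {(y, y)} := by
        rw [← hres]
        exact ⟨hab.1, Or.inl ha, Or.inl hb⟩
      rcases this with h | h
      · exact h
      · exact absurd (pair_eq h).1 hab.2.1
    · intro hq
      have h2 := hQsub hq
      have ha : a ≠ y := fun h => hyZ (h ▸ h2.1)
      have hb : b ≠ y := fun h => hyZ (h ▸ h2.2)
      have : (a, b) ∈ restrict G' (Z ∪ {y}) := by rw [hres]; exact Or.inl hq
      obtain ⟨hab, _, _⟩ := this
      exact ⟨(hGmem a b).2 ⟨hab, ha, hb⟩, h2.1, h2.2⟩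
  · -- gamma
    ext x
    constructor
    · rintro ⟨m, hm, n, hn, hmx, hxn⟩
      rw [hGmem] at hmx hxn
      have : x ∈ gamma G' (Z ∪ {y}) :=
        ⟨m, Or.inl hm, n, Or.inl hn, hmx.1, hxn.1⟩
      rw [hgam] at this
      exact (hGmem x x).2 ⟨this, hmx.2.2, hmx.2.2⟩
    · intro hx
      obtain ⟨hx, hxy, -⟩ := (hGmem x x).1 hx
      have : x ∈ gamma G' (Z ∪ {y}) := by rw [hgam]; exact hx
      obtain ⟨m, hm, n, hn, hmx, hxn⟩ := this
      have hmZ : m ∈ Z := by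
        rcases hm with h | h
        · exact h
        · have h' : m = y := h
          rw [h'] at hmx
          exact absurd (hiso2 x hmx) hxy
      have hnZ : n ∈ Z := by
        rcases hn with h | h
        · exact h
        · have h' : n = y := h
          rw [h'] at hxn
          exact absurd (hiso1 x hxn) hxy
      have hmy : m ≠ y := fun h => hyZ (h ▸ hmZ)
      have hny : n ≠ y := fun h => hyZ (h ▸ hnZ)
      exact ⟨m, hmZ, n, hnZ, (hGmem m x).2 ⟨hmx, hmy, hxy⟩,
        (hGmem x n).2 ⟨hxn, hxy, hny⟩⟩

end Aux

/-- `𝔊_{Q+A_y}(X) = {G + A_y : G ∈ 𝔊_Q(X)}`. -/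
theorem stmt15 {α : Type*} (X Z : Set α) (hX : X.Finite) (hZ : Z.Finite)
    (hXZ : Disjoint X Z) (Q : Set (α × α)) (hQ : IsPor Z Q)
    (y : α) (hy : y ∉ X ∪ Z) :
    Gset (Q ∪ {(y, y)}) X (Z ∪ {y}) =
        (fun G => G ∪ {(y, y)}) '' Gset Q X Z ∧
      ∀ G' : Set (α × α), G' ∈ Gset (Q ∪ {(y, y)}) X (Z ∪ {y}) ↔
        ∃ G ∈ Gset Q X Z, G' = G ∪ {(y, y)} := by
  have key : ∀ G' : Set (α × α), G' ∈ Gset (Q ∪ {(y, y)}) X (Z ∪ {y}) ↔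
      ∃ G ∈ Gset Q X Z, G' = G ∪ {(y, y)} := by
    intro G'
    constructor
    · intro h
      obtain ⟨h1, h2⟩ := gset_remove_point hXZ hQ hy h
      exact ⟨G' \ {(y, y)}, h1, h2⟩
    · rintro ⟨G, hG, rfl⟩
      exact gset_add_point hQ hy hG
  constructor
  · ext G'
    rw [key G']
    constructor
    · rintro ⟨G, hG, rfl⟩
      exact ⟨G, hG, rfl⟩
    · rintro ⟨G, hG, rfl⟩
      exact ⟨G, hG, rfl⟩
  · exact key


end Erne
end

section
/- Let X, Y be finite disjoint sets and Q ∈ 𝔓(Y). Then 𝔐*_Q(X,Y) ⊆ 𝔐_Q(X,Y); that is, if R ∈ ℭ_Q(X,Y) satisfies max Q = max R, then Y is an upper end of R. -/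
namespace Erne

variable {α : Type*}

private lemma exists_rel_max {α : Type*} (R : Set (α × α))
    (hanti : ∀ x y, (x, y) ∈ R → (y, x) ∈ R → x = y)
    (htrans : ∀ x y z, (x, y) ∈ R → (y, z) ∈ R → (x, z) ∈ R) :
    ∀ n (s : Finset α), s.card = n → s.Nonempty →
      ∃ m ∈ s, ∀ z ∈ s, (m, z) ∈ R → z = m := by
  classical
  intro n
  induction n using Nat.strong_induction_on with
  | _ n ih =>
    intro s hcard hne
    obtain ⟨x, hx⟩ := hne
    by_cases h : ∀ z ∈ s, (x, z) ∈ R → z = x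
    · exact ⟨x, hx, h⟩
    · push_neg at h
      obtain ⟨z, hz, hxz, hzx⟩ := h
      set s' := s.filter (fun w => (x, w) ∈ R ∧ w ≠ x) with hs'
      have hz' : z ∈ s' := by simp [hs', hz, hxz, hzx]
      have hxs' : x ∉ s' := by simp [hs']
      have hsub : s' ⊆ s := Finset.filter_subset _ _
      have hlt : s'.card < n := by
        rw [← hcard]
        exact Finset.card_lt_card ((Finset.ssubset_iff_of_subset hsub).mpr ⟨x, hx, hxs'⟩)
      obtain ⟨m, hm, hmax⟩ := ih s'.card hlt s' rfl ⟨z, hz'⟩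
      have hm' := Finset.mem_filter.mp hm
      refine ⟨m, hsub hm, fun w hw hmw => ?_⟩
      have hxw : (x, w) ∈ R := htrans _ _ _ hm'.2.1 hmw
      have hwx : w ≠ x := by
        rintro rfl
        exact hm'.2.2 (hanti _ _ hmw hm'.2.1)
      exact hmax w (by simp [hs', hw, hxw, hwx]) hmw

/-- `𝔐*_Q(X,Y) ⊆ 𝔐_Q(X,Y)`: if `R ∈ ℭ_Q(X,Y)` satisfies
`max Q = max R`, then `Y` is an upper end of `R`. -/
theorem stmt18 {α : Type*} (X Y : Set α) (hX : X.Finite) (hY : Y.Finite)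
    (hXY : Disjoint X Y) (Q : Set (α × α)) (hQ : IsPor Y Q) :
    MstarSet Q X Y ⊆ Mset Q X Y ∧
      ∀ R ∈ Cset Q X Y, maxPts Q = maxPts R → IsUpperEnd R Y := by
  classical
  have key : ∀ R ∈ Cset Q X Y, maxPts Q = maxPts R → IsUpperEnd R Y := by
    rintro R ⟨hpor, hrest, hconv⟩ hmaxeq y x hyx hyY
    obtain ⟨hsub, hrefl, hanti, htrans⟩ := hpor
    have hxXY : x ∈ X ∪ Y := (hsub hyx).2
    have hfin : (X ∪ Y).Finite := hX.union hY
    set s : Finset α := hfin.toFinset.filter (fun z => (x, z) ∈ R) with hs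
    have hxs : x ∈ s := by
      simp [hs, hfin.mem_toFinset, hxXY, hrefl x hxXY]
    obtain ⟨m, hm, hmax⟩ := exists_rel_max R hanti htrans s.card s rfl ⟨x, hxs⟩
    have hm' := Finset.mem_filter.mp hm
    have hxm : (x, m) ∈ R := hm'.2
    have hmmax : m ∈ maxPts R := by
      have hmXY : m ∈ X ∪ Y := (hsub hxm).2
      have hmm : (m, m) ∈ R := hrefl m hmXY
      apply Set.eq_of_subset_of_subset
      · intro w hw
        have hws : w ∈ s := by
          simp [hs, hfin.mem_toFinset, (hsub hw).2, htrans _ _ _ hxm hw]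
        exact hmax w hws hw
      · intro w hw
        rcases hw with rfl
        exact hmm
    have hmQ : m ∈ maxPts Q := hmaxeq ▸ hmmax
    have hmm' : (m, m) ∈ Q := by
      have : m ∈ up Q m := by rw [hmQ]; rfl
      exact this
    have hmY : m ∈ Y := (hQ.1 hmm').1
    exact hconv y m x hyY hmY hyx hxm
  refine ⟨?_, key⟩
  rintro R ⟨hC, hmaxeq⟩
  exact ⟨⟨hC.1, key R hC hmaxeq⟩, hC⟩

end Erne
end
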